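/- For every scoring matrix γ: edist_γ(s,t) > 0 for all s ≠ t ∈ Σ* if and only if γ(a,a) ≥ 0 for all a ∈ Σ, and γ(a,b) > 0, γ(a,‐) > 0, γ(‐,a) > 0 for all distinct a,b ∈ Σ. -/

import Mathlib

open List

/-- A scoring matrix on alphabet `σ`; `none` represents the space symbol `‐`.
The value at `(none, none)` is irrelevant (never used on admissible columns). -/
abbrev Scoring (σ : Type*) := Option σ → Option σ → ℝ

/-- `A` is an alignment of the sequences `s` and `t`: a list of columns over
`Σ₋ × Σ₋` with no column `(‐,‐)`, whose first (resp. second) components with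
spaces removed spell `s` (resp. `t`). -/
def IsAlignment {σ : Type*} (A : List (Option σ × Option σ)) (s t : List σ) : Prop :=
  (∀ c ∈ A, c ≠ ((none : Option σ), (none : Option σ))) ∧
  A.filterMap Prod.fst = s ∧ A.filterMap Prod.snd = t

/-- The score of an alignment: the sum of `γ` over its columns. -/
def alignScore {σ : Type*} (γ : Scoring σ) (A : List (Option σ × Option σ)) : ℝ :=
  (A.map fun c => γ c.1 c.2).sum

/-- The weighted edit distance: minimum alignment score. -/
noncomputable def editDist {σ : Type*} (γ : Scoring σ) (s t : List σ) : ℝ :=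
  sInf {x | ∃ A, IsAlignment A s t ∧ alignScore γ A = x}

/-- The normalized edit distance: minimum normalized alignment score
(score divided by number of columns); for `s = t = ε` it is `0`. -/
noncomputable def ndist {σ : Type*} (γ : Scoring σ) (s t : List σ) : ℝ :=
  sInf {x | ∃ A, IsAlignment A s t ∧ alignScore γ A / (A.length : ℝ) = x}

/-- A walk in the digraph `D(γ)`: a list of vertices of `Σ₋` in which the
space `‐` never follows the space. -/
def IsWalkSeq {σ : Type*} (W : List (Option σ)) : Prop :=
  W.Chain' (fun a b => ¬(a = none ∧ b = none))

/-- The weight of a walk: the sum of the weights of its consecutive arcs. -/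
def walkWeight {σ : Type*} (γ : Scoring σ) (W : List (Option σ)) : ℝ :=
  ((W.zip W.tail).map fun p => γ p.1 p.2).sum

/-- `D(γ)` has a cycle of negative total weight (cycles start and end at a
vertex of `Σ`). -/
def HasNegCycle {σ : Type*} (γ : Scoring σ) : Prop :=
  ∃ (a : σ) (W : List (Option σ)),
    IsWalkSeq (some a :: (W ++ [some a])) ∧
    walkWeight γ (some a :: (W ++ [some a])) < 0

/-- The shortest-walk distance from `x` to `y` in `D(γ)`. -/
noncomputable def walkDist {σ : Type*} (γ : Scoring σ) (x y : Option σ) : ℝ :=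
  sInf {w | ∃ W : List (Option σ), IsWalkSeq W ∧ W.head? = some x ∧
    W.getLast? = some y ∧ walkWeight γ W = w}

/-- A column of an extended alignment: a nonempty sequence over `Σ₋`, with at
least one non-space symbol, no two consecutive spaces, and not having a space
at both ends. -/
def IsExtCol {σ : Type*} (c : List (Option σ)) : Prop :=
  c ≠ [] ∧ (∃ x ∈ c, x ≠ none) ∧
  c.Chain' (fun a b => ¬(a = none ∧ b = none)) ∧
  ¬(c.head? = some none ∧ c.getLast? = some none)

/-- An extended alignment of `s, t`: a list of admissible columns whose first
symbols (spaces removed) spell `s` and whose last symbols spell `t`. -/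
def IsExtAlignment {σ : Type*} (E : List (List (Option σ))) (s t : List σ) : Prop :=
  (∀ c ∈ E, IsExtCol c) ∧
  E.filterMap (fun c => c.head?.bind id) = s ∧
  E.filterMap (fun c => c.getLast?.bind id) = t

/-- The extended edit distance: minimum total score over extended alignments,
where the score of a column is the sum of `γ` over its consecutive pairs. -/
noncomputable def edist {σ : Type*} (γ : Scoring σ) (s t : List σ) : ℝ :=
  sInf {x | ∃ E, IsExtAlignment E s t ∧ (E.map (walkWeight γ)).sum = x}

/-- `f` is a premetric: `f x x = 0` and `f x y ≥ 0`. -/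
def IsPremetric {σ : Type*} (f : List σ → List σ → ℝ) : Prop :=
  (∀ s, f s s = 0) ∧ (∀ s t, 0 ≤ f s t)

-- auxiliary lemmas
lemma walkWeight_cons_cons {σ : Type*} (γ : Scoring σ) (x y : Option σ) (l : List (Option σ)) :
    walkWeight γ (x :: y :: l) = γ x y + walkWeight γ (y :: l) := by
  simp [walkWeight]

lemma chain'_forall_zip {α : Type*} {R : α → α → Prop} :
    ∀ {l : List α}, l.Chain' R → ∀ p ∈ l.zip l.tail, R p.1 p.2
  | [], _, p, hp => by simp at hp
  | [a], _, p, hp => by simp at hp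
  | a :: b :: l, h, p, hp => by
      rw [List.Chain', List.isChain_cons_cons] at h
      simp only [List.tail_cons, List.zip_cons_cons, List.mem_cons] at hp
      rcases hp with rfl | hp
      · exact h.1
      · exact chain'_forall_zip h.2 p hp

lemma chain'_of_forall_zip {α : Type*} {R : α → α → Prop} :
    ∀ {l : List α}, (∀ p ∈ l.zip l.tail, R p.1 p.2) → l.Chain' R
  | [], _ => List.isChain_nil
  | [a], _ => List.isChain_singleton a
  | a :: b :: l, h => by
      rw [List.Chain', List.isChain_cons_cons]
      refine ⟨h (a, b) (by simp), chain'_of_forall_zip fun p hp => h p ?_⟩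
      simp only [List.tail_cons, List.zip_cons_cons, List.mem_cons]
      exact Or.inr hp

lemma eq_head_of_chain'_eq {α : Type*} :
    ∀ {l : List α}, l.Chain' Eq → ∀ x ∈ l, some x = l.head?
  | [], _, x, hx => by simp at hx
  | [a], _, x, hx => by simp at hx ⊢; exact hx
  | a :: b :: l, h, x, hx => by
      rw [List.Chain', List.isChain_cons_cons] at h
      rcases List.mem_cons.1 hx with rfl | hx
      · rfl
      · have := eq_head_of_chain'_eq h.2 x hx
        simp only [List.head?_cons] at this ⊢
        rw [this, h.1]

lemma exists_ne_arc {σ : Type*} {c : List (Option σ)} (hnil : c ≠ [])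
    (hne : c.head?.bind id ≠ c.getLast?.bind id) :
    ∃ p ∈ c.zip c.tail, p.1 ≠ p.2 := by
  by_contra h
  push_neg at h
  have hchain : c.Chain' Eq := chain'_of_forall_zip h
  have h1 : some (c.getLast hnil) = c.head? :=
    eq_head_of_chain'_eq hchain _ (List.getLast_mem hnil)
  have h2 : c.getLast? = c.head? := by rw [List.getLast?_eq_getLast hnil, h1]
  exact hne (by rw [h2])

lemma walkWeight_replicate {σ : Type*} (γ : Scoring σ) (x : Option σ) :
    ∀ n : ℕ, walkWeight γ (List.replicate (n + 1) x) = n * γ x x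
  | 0 => by simp [walkWeight]
  | n + 1 => by
      have h : List.replicate (n + 2) x = x :: x :: List.replicate n x := rfl
      have h2 : (x :: List.replicate n x) = List.replicate (n + 1) x := rfl
      rw [h, walkWeight_cons_cons, h2, walkWeight_replicate γ x n]
      push_cast; ring

lemma exists_trivAlignment {σ : Type*} (s t : List σ) :
    ∃ E : List (List (Option σ)), IsExtAlignment E s t := by
  refine ⟨s.map (fun a => [some a, none]) ++ t.map (fun b => [none, some b]), ?_, ?_, ?_⟩
  · intro c hc
    rcases List.mem_append.1 hc with hc | hc <;> rcases List.mem_map.1 hc with ⟨a, _, rfl⟩ <;>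
      simp [IsExtCol, List.Chain']
  · simp [List.filterMap_append, List.filterMap_map, Function.comp_def,
      List.filterMap_eq_map]
  · simp [List.filterMap_append, List.filterMap_map, Function.comp_def,
      List.filterMap_eq_map]

lemma edist_nonpos {σ : Type*} (γ : Scoring σ) {s t : List σ} {E : List (List (Option σ))}
    (hE : IsExtAlignment E s t) (h : (E.map (walkWeight γ)).sum ≤ 0) : _root_.edist γ s t ≤ 0 := by
  unfold _root_.edist
  by_cases hb : BddBelow {x | ∃ E, IsExtAlignment E s t ∧ (E.map (walkWeight γ)).sum = x}
  · exact le_trans (csInf_le hb ⟨E, hE, rfl⟩) h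
  · rw [Real.sInf_of_not_bddBelow hb]

theorem stmt17 {σ : Type*} [Fintype σ] (γ : Scoring σ) :
    (∀ s t : List σ, s ≠ t → 0 < edist γ s t) ↔
      ((∀ a : σ, 0 ≤ γ (some a) (some a)) ∧
       (∀ a b : σ, a ≠ b → 0 < γ (some a) (some b)) ∧
       (∀ a : σ, 0 < γ (some a) none) ∧
       (∀ a : σ, 0 < γ none (some a))) := by
  classical
  constructor
  · intro h
    -- first the three strict positivity conditions
    have h2 : ∀ a b : σ, a ≠ b → 0 < γ (some a) (some b) := by
      intro a b hab
      by_contra hc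
      push_neg at hc
      have hE : IsExtAlignment [[some a, some b]] [a] [b] := by
        refine ⟨?_, ?_, ?_⟩
        · intro c hc'
          simp only [List.mem_singleton] at hc'
          subst hc'
          refine ⟨by simp, ⟨some a, by simp⟩, by simp [List.Chain'], by simp⟩
        · simp
        · simp
      have := edist_nonpos γ hE (by simp [walkWeight, hc])
      have := h [a] [b] (by simp [hab])
      linarith
    have h3 : ∀ a : σ, 0 < γ (some a) none := by
      intro a
      by_contra hc
      push_neg at hc
      have hE : IsExtAlignment [[some a, none]] [a] [] := by
        refine ⟨?_, ?_, ?_⟩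
        · intro c hc'
          simp only [List.mem_singleton] at hc'
          subst hc'
          refine ⟨by simp, ⟨some a, by simp⟩, by simp [List.Chain'], by simp⟩
        · simp
        · simp
      have := edist_nonpos γ hE (by simp [walkWeight, hc])
      have := h [a] [] (by simp)
      linarith
    have h4 : ∀ a : σ, 0 < γ none (some a) := by
      intro a
      by_contra hc
      push_neg at hc
      have hE : IsExtAlignment [[none, some a]] [] [a] := by
        refine ⟨?_, ?_, ?_⟩
        · intro c hc'
          simp only [List.mem_singleton] at hc'
          subst hc'
          refine ⟨by simp, ⟨some a, by simp⟩, by simp [List.Chain'], by simp⟩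
        · simp
        · simp
      have := edist_nonpos γ hE (by simp [walkWeight, hc])
      have := h [] [a] (by simp)
      linarith
    refine ⟨?_, h2, h3, h4⟩
    -- diagonal nonnegativity
    intro a
    by_contra hc
    push_neg at hc
    obtain ⟨n, hn⟩ := exists_nat_ge (γ none (some a) / (-γ (some a) (some a)))
    have hpos : (0:ℝ) < -γ (some a) (some a) := by linarith
    have hn' : γ none (some a) ≤ n * (-γ (some a) (some a)) := by
      rw [div_le_iff₀ hpos] at hn
      linarith
    have hE : IsExtAlignment [List.replicate (n+1) (some a), [none, some a]] [a] [a, a] := by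
      refine ⟨?_, ?_, ?_⟩
      · intro c hc'
        simp only [List.mem_cons, List.mem_singleton] at hc'
        rcases hc' with rfl | rfl | h'
        · refine ⟨by simp, ⟨some a, by simp, by simp⟩, ?_, ?_⟩
          · refine chain'_of_forall_zip fun p hp => ?_
            have := List.of_mem_zip hp
            have h1 := List.eq_of_mem_replicate this.1
            simp [h1]
          · rw [List.head?_replicate]
            simp
        · refine ⟨by simp, ⟨some a, by simp⟩, by simp [List.Chain'], by simp⟩
        · simp at h'
      · rw [show ((n:ℕ)+1) = n+1 from rfl]
        have : (List.replicate (n+1) (some a : Option σ)).head? = some (some a) := by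
          rw [List.head?_replicate]; simp
        simp [List.filterMap_cons, this]
      · have h1 : (List.replicate (n+1) (some a : Option σ)).getLast? = some (some a) := by
          rw [List.getLast?_eq_getLast (l := List.replicate (n+1) (some a : Option σ)) (by simp), List.getLast_replicate]
        simp [List.filterMap_cons, h1]
    have hscore : ((([List.replicate (n+1) (some a), [none, some a]] :
        List (List (Option σ))).map (walkWeight γ)).sum : ℝ) ≤ 0 := by
      have hw := walkWeight_replicate γ (some a : Option σ) n
      have hw2 : walkWeight γ [none, some a] = γ none (some a) := by simp [walkWeight]
      simp only [List.map_cons, List.map_nil, List.sum_cons, List.sum_nil, hw, hw2, add_zero]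
      nlinarith
    have := edist_nonpos γ hE hscore
    have := h [a] [a, a] (by simp)
    linarith
  · rintro ⟨h1, h2, h3, h4⟩ s t hst
    -- σ is nonempty
    have hσ : Nonempty σ := by
      rcases s with _ | ⟨a, s⟩
      · rcases t with _ | ⟨b, t⟩
        · exact absurd rfl hst
        · exact ⟨b⟩
      · exact ⟨a⟩
    obtain ⟨a0⟩ := hσ
    set S : Finset ℝ :=
      ((Finset.univ : Finset (Option σ × Option σ)).filter (fun p => p.1 ≠ p.2)).image
        (fun p => γ p.1 p.2) with hS
    have hSne : S.Nonempty :=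
      ⟨γ (some a0) none, Finset.mem_image.2 ⟨(some a0, none), by simp, rfl⟩⟩
    set m : ℝ := S.min' hSne with hm
    have hm0 : 0 < m := by
      rw [hm, Finset.lt_min'_iff]
      intro x hx
      obtain ⟨p, hp, rfl⟩ := Finset.mem_image.1 hx
      simp only [Finset.mem_filter, Finset.mem_univ, true_and] at hp
      obtain ⟨x1, x2⟩ := p
      match x1, x2 with
      | none, none => exact absurd rfl hp
      | none, some b => exact h4 b
      | some b, none => exact h3 b
      | some b, some c => exact h2 b c (by simpa using hp)
    have hmle : ∀ p : Option σ × Option σ, p.1 ≠ p.2 → m ≤ γ p.1 p.2 := fun p hp =>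
      Finset.min'_le S _ (Finset.mem_image.2 ⟨p, by simp [hp], rfl⟩)
    have harc : ∀ p : Option σ × Option σ, ¬(p.1 = none ∧ p.2 = none) → 0 ≤ γ p.1 p.2 := by
      rintro ⟨x1, x2⟩ hp
      by_cases hx : x1 = x2
      · subst hx
        match x1 with
        | none => exact absurd ⟨rfl, rfl⟩ hp
        | some b => exact h1 b
      · exact le_of_lt (lt_of_lt_of_le hm0 (hmle _ hx))
    -- lower bound on every alignment score
    have key : ∀ x ∈ {x | ∃ E, IsExtAlignment E s t ∧ (E.map (walkWeight γ)).sum = x},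
        m ≤ x := by
      rintro x ⟨E, ⟨hcols, hhd, htl⟩, rfl⟩
      -- all column scores are nonneg
      have hnn : ∀ w ∈ E.map (walkWeight γ), 0 ≤ w := by
        intro w hw
        obtain ⟨c, hc, rfl⟩ := List.mem_map.1 hw
        refine List.sum_nonneg ?_
        intro y hy
        obtain ⟨p, hp, rfl⟩ := List.mem_map.1 hy
        exact harc p (chain'_forall_zip (hcols c hc).2.2.1 p hp)
      -- some column with distinct head/last symbol
      have hex : ∃ c ∈ E, (fun c => c.head?.bind id) c ≠ (fun c => c.getLast?.bind id) c := by
        by_contra hall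
        push_neg at hall
        exact hst (by rw [← hhd, ← htl, List.filterMap_congr hall])
      obtain ⟨c0, hc0, hc0ne⟩ := hex
      obtain ⟨p0, hp0, hp0ne⟩ := exists_ne_arc (hcols c0 hc0).1 hc0ne
      have hcol0 : m ≤ walkWeight γ c0 := by
        refine le_trans (hmle p0 hp0ne) ?_
        refine List.single_le_sum ?_ _ (List.mem_map.2 ⟨p0, hp0, rfl⟩)
        intro y hy
        obtain ⟨p, hp, rfl⟩ := List.mem_map.1 hy
        exact harc p (chain'_forall_zip (hcols c0 hc0).2.2.1 p hp)
      exact le_trans hcol0 (List.single_le_sum hnn _ (List.mem_map.2 ⟨c0, hc0, rfl⟩))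
    obtain ⟨E0, hE0⟩ := exists_trivAlignment s t
    have : m ≤ _root_.edist γ s t := le_csInf ⟨_, E0, hE0, rfl⟩ key
    linarith
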